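/- Let n ≥ 1, let a < b, and let u : [a, b] → ℂ be n times continuously differentiable. Let p be the unique polynomial of degree at most n − 1 interpolating u at the n mapped Chebyshev nodes y_k = (a+b)/2 + ((b−a)/2)·cos((2k+1)π/(2n)), k = 0, …, n−1. Then for all x ∈ [a, b], |u(x) − p(x)| ≤ ((b − a)^n / (2^{2n−1} · n!)) · sup_{c ∈ (a,b)} |u^{(n)}(c)|. -/

import Mathlib

set_option autoImplicit false

noncomputable section

open Set Polynomial

/-- The `k`-th of the `n` Chebyshev nodes mapped to the interval `[a, b]`:
`(a+b)/2 + ((b−a)/2)·cos((2k+1)π/(2n))`. -/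
noncomputable def chebNode (n : ℕ) (a b : ℝ) (k : Fin n) : ℝ :=
  (a + b) / 2 + ((b - a) / 2) * Real.cos ((2 * (k : ℝ) + 1) * Real.pi / (2 * n))

def chebAngle (n : ℕ) (k : Fin n) : ℝ := (2 * (k : ℝ) + 1) * Real.pi / (2 * n)

lemma chebNode_eq (n : ℕ) (a b : ℝ) (k : Fin n) :
    chebNode n a b k = (a + b) / 2 + ((b - a) / 2) * Real.cos (chebAngle n k) := rfl

lemma polyeval_contDiff {𝕜 : Type*} [NontriviallyNormedField 𝕜] (p : 𝕜[X]) {n : WithTop ℕ∞} :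
    ContDiff 𝕜 n fun x => p.eval x := by
  induction p using Polynomial.induction_on' with
  | add p q hp hq => simpa [Polynomial.eval_add] using hp.add hq
  | monomial k c =>
      simpa [Polynomial.eval_monomial] using (contDiff_const (c := c)).mul (contDiff_id.pow k)

lemma rolle_step {a b : ℝ} {g : ℝ → ℝ} (hg : ContinuousOn g (Set.Icc a b)) {m : ℕ}
    (t : Fin (m + 2) → ℝ) (ht : StrictMono t) (hmem : ∀ i, t i ∈ Set.Icc a b)
    (hz : ∀ i, g (t i) = 0) :
    ∃ s : Fin (m + 1) → ℝ, StrictMono s ∧ (∀ i, s i ∈ Set.Ioo a b) ∧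
      (∀ i, derivWithin g (Set.Icc a b) (s i) = 0) := by
  have H : ∀ i : Fin (m + 1), ∃ c ∈ Set.Ioo (t i.castSucc) (t i.succ), deriv g c = 0 := by
    intro i
    exact exists_deriv_eq_zero (ht (Fin.castSucc_lt_succ (i := i)))
      (hg.mono (Set.Icc_subset_Icc (hmem _).1 (hmem _).2)) (by rw [hz, hz])
  choose s hs hs0 using H
  have hIoo : ∀ i, s i ∈ Set.Ioo a b := by
    intro i
    exact ⟨lt_of_le_of_lt (hmem i.castSucc).1 (hs i).1, lt_of_lt_of_le (hs i).2 (hmem i.succ).2⟩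
  refine ⟨s, ?_, hIoo, ?_⟩
  · rw [Fin.strictMono_iff_lt_succ]
    intro i
    calc s i.castSucc < t i.castSucc.succ := (hs i.castSucc).2
      _ ≤ t i.succ.castSucc := by
          apply ht.monotone
          simp [Fin.le_def]
      _ < s i.succ := (hs i.succ).1
  · intro i
    rw [derivWithin_of_mem_nhds (Icc_mem_nhds (hIoo i).1 (hIoo i).2)]
    exact hs0 i

lemma rolle_iter : ∀ (m : ℕ) {a b : ℝ}, a < b → ∀ g : ℝ → ℝ,
    ContDiffOn ℝ (m + 1) g (Set.Icc a b) → ∀ t : Fin (m + 2) → ℝ, StrictMono t →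
    (∀ i, t i ∈ Set.Icc a b) → (∀ i, g (t i) = 0) →
    ∃ c ∈ Set.Ioo a b, iteratedDerivWithin (m + 1) g (Set.Icc a b) c = 0 := by
  intro m
  induction m with
  | zero =>
    intro a b hab g hg t ht hmem hz
    obtain ⟨s, _, hIoo, hd⟩ := rolle_step hg.continuousOn t ht hmem hz
    refine ⟨s 0, hIoo 0, ?_⟩
    rw [iteratedDerivWithin_one]
    exact hd 0
  | succ m IH =>
    intro a b hab g hg t ht hmem hz
    obtain ⟨s, hsm, hIoo, hd⟩ := rolle_step hg.continuousOn t ht hmem hz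
    have hg' : ContDiffOn ℝ (m + 1) (derivWithin g (Set.Icc a b)) (Set.Icc a b) := by
      apply hg.derivWithin (uniqueDiffOn_Icc hab)
      norm_cast
    obtain ⟨c, hc, hc0⟩ := IH hab _ hg' s hsm
      (fun i => Set.Ioo_subset_Icc_self (hIoo i)) hd
    refine ⟨c, hc, ?_⟩
    rw [iteratedDerivWithin_succ']
    exact hc0

lemma rolle_finset {n : ℕ} (hn : 1 ≤ n) {a b : ℝ} (hab : a < b) {g : ℝ → ℝ}
    (hg : ContDiffOn ℝ n g (Set.Icc a b)) (S : Finset ℝ) (hcard : S.card = n + 1)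
    (hmem : ∀ y ∈ S, y ∈ Set.Icc a b) (hz : ∀ y ∈ S, g y = 0) :
    ∃ c ∈ Set.Ioo a b, iteratedDerivWithin n g (Set.Icc a b) c = 0 := by
  obtain ⟨m, rfl⟩ := Nat.exists_eq_add_of_le hn
  have hcard' : S.card = m + 2 := by omega
  set t : Fin (m + 2) → ℝ := fun i => (S.orderIsoOfFin hcard' i : ℝ) with hts
  have ht : StrictMono t := fun i j hij => by
    exact_mod_cast (S.orderIsoOfFin hcard').strictMono hij
  have htS : ∀ i, t i ∈ S := fun i => (S.orderIsoOfFin hcard' i).2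
  have : (1 + m : ℕ) = m + 1 := by omega
  rw [this] at hg ⊢
  exact rolle_iter m hab g hg t ht (fun i => hmem _ (htS i)) (fun i => hz _ (htS i))


lemma iDW_polyeval_real (m : ℕ) (Q : ℝ[X]) {s : Set ℝ} (hs : UniqueDiffOn ℝ s) :
    ∀ x ∈ s, iteratedDerivWithin m (fun t => Q.eval t) s x =
      (Polynomial.derivative^[m] Q).eval x := by
  induction m generalizing Q with
  | zero => intro x hx; simp
  | succ m IH =>
    intro x hx
    rw [iteratedDerivWithin_succ']
    have heq : Set.EqOn (derivWithin (fun t => Q.eval t) s)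
        (fun t => (Polynomial.derivative Q).eval t) s := by
      intro y hy
      exact ((Q.hasDerivAt y).hasDerivWithinAt).derivWithin (hs.uniqueDiffWithinAt hy)
    rw [iteratedDerivWithin_congr heq hx, IH _ x hx, Function.iterate_succ_apply]

lemma iDW_polyeval_complex (m : ℕ) (P : ℂ[X]) {s : Set ℝ} (hs : UniqueDiffOn ℝ s) :
    ∀ x ∈ s, iteratedDerivWithin m (fun t : ℝ => P.eval (t : ℂ)) s x =
      (Polynomial.derivative^[m] P).eval (x : ℂ) := by
  induction m generalizing P with
  | zero => intro x hx; simp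
  | succ m IH =>
    intro x hx
    rw [iteratedDerivWithin_succ']
    have heq : Set.EqOn (derivWithin (fun t : ℝ => P.eval (t : ℂ)) s)
        (fun t : ℝ => (Polynomial.derivative P).eval (t : ℂ)) s := by
      intro y hy
      exact ((P.hasDerivAt (y : ℂ)).comp_ofReal).hasDerivWithinAt.derivWithin
        (hs.uniqueDiffWithinAt hy)
    rw [iteratedDerivWithin_congr heq hx, IH _ x hx, Function.iterate_succ_apply]

lemma clm_comp_iDW {F G : Type*} [NormedAddCommGroup F] [NormedSpace ℝ F]
    [NormedAddCommGroup G] [NormedSpace ℝ G] (L : F →L[ℝ] G) {f : ℝ → F} {s : Set ℝ}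
    {x : ℝ} {n : ℕ} (hf : ContDiffOn ℝ n f s) (hs : UniqueDiffOn ℝ s) (hx : x ∈ s) :
    iteratedDerivWithin n (fun t => L (f t)) s x = L (iteratedDerivWithin n f s x) := by
  have := L.iteratedFDerivWithin_comp_left (hf x hx) hs hx (i := n) le_rfl
  simp only [iteratedDerivWithin]
  rw [show (fun t => L (f t)) = (⇑L ∘ f) from rfl, this]
  rfl


lemma T_natDegree_le : ∀ N : ℕ, (Polynomial.Chebyshev.T ℝ N).natDegree ≤ N := by
  intro N
  induction N using Nat.twoStepInduction with
  | zero => simp [Polynomial.Chebyshev.T_zero]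
  | one => simp [Polynomial.Chebyshev.T_one]
  | more N h1 h2 =>
    have hT : Polynomial.Chebyshev.T ℝ (N + 2 : ℕ) =
        2 * Polynomial.X * Polynomial.Chebyshev.T ℝ (N + 1 : ℕ) -
          Polynomial.Chebyshev.T ℝ N := by
      have := Polynomial.Chebyshev.T_add_two ℝ (N : ℤ)
      push_cast
      push_cast at this
      exact this
    rw [hT]
    refine le_trans (Polynomial.natDegree_sub_le _ _) ?_
    refine max_le (le_trans (Polynomial.natDegree_mul_le) ?_) (by omega)
    have : (2 * Polynomial.X : ℝ[X]).natDegree ≤ 1 := by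
      refine le_trans (Polynomial.natDegree_mul_le) ?_
      simp
    omega

lemma T_coeff_top : ∀ N : ℕ, (Polynomial.Chebyshev.T ℝ (N + 1 : ℕ)).coeff (N + 1) = 2 ^ N := by
  intro N
  induction N using Nat.twoStepInduction with
  | zero => simp [Polynomial.Chebyshev.T_one]
  | one =>
    have : Polynomial.Chebyshev.T ℝ (2 : ℕ) = 2 * Polynomial.X ^ 2 - 1 := by
      have := Polynomial.Chebyshev.T_two ℝ
      norm_cast
    rw [this]
    simp [Polynomial.coeff_ofNat_mul, Polynomial.coeff_one]
  | more N h1 h2 =>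
    have hT : Polynomial.Chebyshev.T ℝ (N + 3 : ℕ) =
        2 * Polynomial.X * Polynomial.Chebyshev.T ℝ (N + 2 : ℕ) -
          Polynomial.Chebyshev.T ℝ (N + 1 : ℕ) := by
      have := Polynomial.Chebyshev.T_add_two ℝ (N + 1 : ℤ)
      push_cast
      push_cast at this
      convert this using 2 <;> ring_nf
    rw [hT]
    rw [Polynomial.coeff_sub]
    have hco : (Polynomial.Chebyshev.T ℝ (N + 1 : ℕ)).coeff (N + 3) = 0 :=
      Polynomial.coeff_eq_zero_of_natDegree_lt (lt_of_le_of_lt (T_natDegree_le (N + 1)) (by omega))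
    have hmul : (2 * Polynomial.X * Polynomial.Chebyshev.T ℝ (N + 2 : ℕ)).coeff (N + 3) =
        2 * (Polynomial.Chebyshev.T ℝ (N + 2 : ℕ)).coeff (N + 2) := by
      rw [mul_assoc, Polynomial.coeff_ofNat_mul, Polynomial.coeff_X_mul]
    rw [hmul, hco, h2]
    ring


lemma chebAngle_mem {n : ℕ} (hn : 1 ≤ n) (k : Fin n) :
    chebAngle n k ∈ Set.Ioo 0 Real.pi := by
  have hπ := Real.pi_pos
  have hk : (k : ℝ) ≤ (n : ℝ) - 1 := by
    have := k.2
    have : (k : ℝ) + 1 ≤ (n : ℝ) := by exact_mod_cast this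
    linarith
  have hn' : (0 : ℝ) < n := by exact_mod_cast hn
  constructor
  · apply div_pos (by positivity) (by positivity)
  · rw [chebAngle, div_lt_iff₀ (by positivity)]
    nlinarith

lemma strictAnti_cos_chebAngle {n : ℕ} (hn : 1 ≤ n) :
    StrictAnti (fun k : Fin n => Real.cos (chebAngle n k)) := by
  intro k l hkl
  have hn' : (0 : ℝ) < n := by exact_mod_cast hn
  have hkl' : (k : ℝ) < (l : ℝ) := by exact_mod_cast hkl
  have hang : chebAngle n k < chebAngle n l := by
    unfold chebAngle
    gcongr
    all_goals first | positivity | linarith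
  have hk := chebAngle_mem hn k
  have hl := chebAngle_mem hn l
  exact Real.strictAntiOn_cos ⟨hk.1.le, hk.2.le⟩ ⟨hl.1.le, hl.2.le⟩ hang

lemma injective_cos_chebAngle {n : ℕ} (hn : 1 ≤ n) :
    Function.Injective (fun k : Fin n => Real.cos (chebAngle n k)) :=
  (strictAnti_cos_chebAngle hn).injective

/-- T ℝ n = 2^(n-1) * ∏ (X - cos θ_k) -/
lemma T_eq_prod {n : ℕ} (hn : 1 ≤ n) :
    Polynomial.Chebyshev.T ℝ n =
      Polynomial.C ((2 : ℝ) ^ (n - 1)) *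
        ∏ k : Fin n, (Polynomial.X - Polynomial.C (Real.cos (chebAngle n k))) := by
  set P : ℝ[X] := ∏ k : Fin n, (Polynomial.X - Polynomial.C (Real.cos (chebAngle n k))) with hP
  have hPmonic : P.Monic := Polynomial.monic_prod_of_monic _ _ fun k _ => Polynomial.monic_X_sub_C _
  have hPdeg : P.natDegree = n := by
    rw [hP, Polynomial.natDegree_prod _ _ (fun k _ => Polynomial.X_sub_C_ne_zero _)]
    simp [Polynomial.natDegree_X_sub_C]
  set D : ℝ[X] := Polynomial.Chebyshev.T ℝ n - Polynomial.C ((2 : ℝ) ^ (n - 1)) * P with hD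
  have hcoeff : ∀ m : ℕ, n ≤ m → D.coeff m = 0 := by
    intro m hm
    rw [hD, Polynomial.coeff_sub, Polynomial.coeff_C_mul]
    rcases eq_or_lt_of_le hm with h | h
    · subst h
      obtain ⟨N, rfl⟩ := Nat.exists_eq_add_of_le hn
      have h1 : (Polynomial.Chebyshev.T ℝ (1 + N : ℕ)).coeff (1 + N) = 2 ^ N := by
        have := T_coeff_top N
        rw [Nat.add_comm 1 N] at *
        exact this
      have h2 : P.coeff (1 + N) = 1 := by
        have := hPmonic.coeff_natDegree
        rwa [hPdeg] at this
      rw [h1, h2]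
      simp [Nat.add_sub_cancel_left]
    · rw [Polynomial.coeff_eq_zero_of_natDegree_lt (lt_of_le_of_lt (T_natDegree_le n) h),
        Polynomial.coeff_eq_zero_of_natDegree_lt (by rw [hPdeg]; exact h)]
      ring
  have hroots : ∀ k : Fin n, D.eval (Real.cos (chebAngle n k)) = 0 := by
    intro k
    have hT : (Polynomial.Chebyshev.T ℝ n).eval (Real.cos (chebAngle n k)) = 0 := by
      have := Polynomial.Chebyshev.T_real_cos (chebAngle n k) n
      rw [this]
      have hn' : (n : ℝ) ≠ 0 := by positivity
      have key : (((n : ℤ) : ℝ)) * chebAngle n k = ((k : ℕ) : ℝ) * Real.pi + Real.pi / 2 := by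
        push_cast
        simp only [chebAngle]
        field_simp
      rw [key, Real.cos_add]
      simp [Real.sin_nat_mul_pi, Real.cos_pi_div_two]
    have hPz : P.eval (Real.cos (chebAngle n k)) = 0 := by
      rw [hP, Polynomial.eval_prod]
      apply Finset.prod_eq_zero (Finset.mem_univ k)
      simp
    rw [hD]
    simp [hT, hPz]
  have hD0 : D = 0 := by
    rcases eq_or_ne D 0 with h | h
    · exact h
    have hdeg : D.degree < (n : ℕ) := (Polynomial.degree_lt_iff_coeff_zero D n).2
      (fun m hm => hcoeff m (by exact_mod_cast hm))
    have hndeg : D.natDegree < n := by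
      rwa [← Polynomial.natDegree_lt_iff_degree_lt h] at hdeg
    exact Polynomial.eq_zero_of_natDegree_lt_card_of_eval_eq_zero D
      (injective_cos_chebAngle hn) hroots (by simpa using hndeg)
  have := sub_eq_zero.mp hD0
  exact this


lemma prod_sub_cos_le {n : ℕ} (hn : 1 ≤ n) {s : ℝ} (hs : s ∈ Set.Icc (-1 : ℝ) 1) :
    |∏ k : Fin n, (s - Real.cos (chebAngle n k))| * 2 ^ (n - 1) ≤ 1 := by
  have h := congrArg (Polynomial.eval s) (T_eq_prod hn)
  rw [Polynomial.eval_mul, Polynomial.eval_C, Polynomial.eval_prod] at h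
  simp only [Polynomial.eval_sub, Polynomial.eval_X, Polynomial.eval_C] at h
  have hT : |Polynomial.eval s (Polynomial.Chebyshev.T ℝ n)| ≤ 1 := by
    conv_lhs => rw [← Real.cos_arccos hs.1 hs.2]
    rw [Polynomial.Chebyshev.T_real_cos]
    exact Real.abs_cos_le_one _
  rw [h, abs_mul, abs_pow, abs_two] at hT
  calc |∏ k : Fin n, (s - Real.cos (chebAngle n k))| * 2 ^ (n - 1)
      = 2 ^ (n - 1) * |∏ k : Fin n, (s - Real.cos (chebAngle n k))| := by ring
    _ ≤ 1 := hT

lemma cheb_nodal_bound {n : ℕ} (hn : 1 ≤ n) {a b : ℝ} (hab : a < b) {x : ℝ}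
    (hx : x ∈ Set.Icc a b) :
    |Polynomial.eval x (∏ k : Fin n, (Polynomial.X - Polynomial.C (chebNode n a b k)))| ≤
      (b - a) ^ n / 2 ^ (2 * n - 1) := by
  have hba : (0 : ℝ) < b - a := by linarith
  set s : ℝ := (2 * x - (a + b)) / (b - a) with hsdef
  have hs : s ∈ Set.Icc (-1 : ℝ) 1 := by
    rw [Set.mem_Icc, hsdef, le_div_iff₀ hba, div_le_one hba]
    obtain ⟨h1, h2⟩ := hx
    constructor <;> linarith
  have hfac : ∀ k : Fin n, x - chebNode n a b k = ((b - a) / 2) * (s - Real.cos (chebAngle n k)) := by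
    intro k
    rw [chebNode_eq, hsdef]
    field_simp
    ring
  rw [Polynomial.eval_prod]
  simp only [Polynomial.eval_sub, Polynomial.eval_X, Polynomial.eval_C]
  calc |∏ k : Fin n, (x - chebNode n a b k)|
      = |∏ k : Fin n, (((b - a) / 2) * (s - Real.cos (chebAngle n k)))| := by
        congr 1; exact Finset.prod_congr rfl fun k _ => hfac k
    _ = ((b - a) / 2) ^ n * |∏ k : Fin n, (s - Real.cos (chebAngle n k))| := by
        rw [Finset.prod_mul_distrib, Finset.prod_const, abs_mul, abs_pow, Finset.card_univ,
          Fintype.card_fin, abs_of_pos (by positivity : (0:ℝ) < (b - a) / 2)]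
    _ ≤ (b - a) ^ n / 2 ^ (2 * n - 1) := by
        have h1 := prod_sub_cos_le hn hs
        have h2 : (0 : ℝ) < 2 ^ (n - 1) := by positivity
        have habs : |∏ k : Fin n, (s - Real.cos (chebAngle n k))| ≤ 1 / 2 ^ (n - 1) := by
          rw [le_div_iff₀ h2]; linarith
        have key : ((b - a) / 2) ^ n * (1 / 2 ^ (n - 1)) = (b - a) ^ n / 2 ^ (2 * n - 1) := by
          rw [div_pow, show (2 : ℝ) ^ (2 * n - 1) = 2 ^ n * 2 ^ (n - 1) by
            rw [← pow_add]; congr 1; omega]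
          field_simp
        calc ((b - a) / 2) ^ n * |∏ k : Fin n, (s - Real.cos (chebAngle n k))|
            ≤ ((b - a) / 2) ^ n * (1 / 2 ^ (n - 1)) := by
              apply mul_le_mul_of_nonneg_left habs (by positivity)
          _ = (b - a) ^ n / 2 ^ (2 * n - 1) := key


lemma iterate_derivative_add' {R : Type*} [CommSemiring R] (k : ℕ) (p q : R[X]) :
    Polynomial.derivative^[k] (p + q) =
      Polynomial.derivative^[k] p + Polynomial.derivative^[k] q := by
  induction k generalizing p q with
  | zero => rfl
  | succ k ih => simp [Function.iterate_succ_apply, Polynomial.derivative_add, ih]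

/-- n-th iterated derivative of the monic nodal polynomial is n!. -/
lemma iterate_derivative_nodal {n : ℕ} (a b : ℝ) :
    Polynomial.derivative^[n] (∏ k : Fin n, (Polynomial.X - Polynomial.C (chebNode n a b k)))
      = Polynomial.C (n.factorial : ℝ) := by
  set W : ℝ[X] := ∏ k : Fin n, (Polynomial.X - Polynomial.C (chebNode n a b k)) with hW
  have hWmonic : W.Monic := Polynomial.monic_prod_of_monic _ _ fun k _ => Polynomial.monic_X_sub_C _
  have hWdeg : W.natDegree = n := by
    rw [hW, Polynomial.natDegree_prod _ _ (fun k _ => Polynomial.X_sub_C_ne_zero _)]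
    simp [Polynomial.natDegree_X_sub_C]
  have hsplit : W = Polynomial.X ^ n + (W - Polynomial.X ^ n) := by ring
  rw [hsplit, iterate_derivative_add', Polynomial.iterate_derivative_X_pow_eq_C_mul]
  have hzero : Polynomial.derivative^[n] (W - Polynomial.X ^ n) = 0 := by
    rcases eq_or_ne (W - Polynomial.X ^ n) 0 with h | h
    · rw [h]; simp
    · apply Polynomial.iterate_derivative_eq_zero
      rw [Polynomial.natDegree_lt_iff_degree_lt h]
      have : (W - Polynomial.X ^ n).degree < W.degree := by
        apply Polynomial.degree_sub_lt
        · rw [Polynomial.degree_X_pow, Polynomial.degree_eq_natDegree hWmonic.ne_zero, hWdeg]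
        · exact hWmonic.ne_zero
        · rw [hWmonic.leadingCoeff, Polynomial.leadingCoeff_X_pow]
      calc (W - Polynomial.X ^ n).degree < W.degree := this
        _ = (n : ℕ) := by rw [Polynomial.degree_eq_natDegree hWmonic.ne_zero, hWdeg]
  rw [hzero, add_zero, Nat.descFactorial_self]
  simp

/-- Chebyshev interpolation error bound. If `u : [a,b] → ℂ` is `n` times
continuously differentiable and `p` is a polynomial of degree at most `n − 1`
interpolating `u` at the `n` mapped Chebyshev nodes, then for all `x ∈ [a,b]`,
`|u(x) − p(x)| ≤ (b−a)^n / (2^{2n−1} n!) · sup_{c ∈ (a,b)} |u^{(n)}(c)|`. -/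
theorem chebyshev_interpolation_error (n : ℕ) (hn : 1 ≤ n) (a b : ℝ) (hab : a < b)
    (u : ℝ → ℂ) (hu : ContDiffOn ℝ n u (Set.Icc a b))
    (p : Polynomial ℂ) (hdeg : p.natDegree ≤ n - 1)
    (hinterp : ∀ k : Fin n, p.eval ((chebNode n a b k : ℝ) : ℂ) = u (chebNode n a b k)) :
    ∀ x ∈ Set.Icc a b,
      ‖u x - p.eval ((x : ℝ) : ℂ)‖ ≤
        (b - a) ^ n / (2 ^ (2 * n - 1) * (n.factorial : ℝ)) *
          sSup ((fun c => ‖iteratedDerivWithin n u (Set.Icc a b) c‖) '' Set.Ioo a b) := by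
  intro x hx
  have hU : UniqueDiffOn ℝ (Set.Icc a b) := uniqueDiffOn_Icc hab
  set M := sSup ((fun c => ‖iteratedDerivWithin n u (Set.Icc a b) c‖) '' Set.Ioo a b) with hM
  have hcont : ContinuousOn (fun c => ‖iteratedDerivWithin n u (Set.Icc a b) c‖) (Set.Icc a b) :=
    (hu.continuousOn_iteratedDerivWithin le_rfl hU).norm
  have hbdd : BddAbove ((fun c => ‖iteratedDerivWithin n u (Set.Icc a b) c‖) '' Set.Ioo a b) :=
    (isCompact_Icc.bddAbove_image hcont).mono (Set.image_mono Set.Ioo_subset_Icc_self)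
  have hMle : ∀ c ∈ Set.Ioo a b, ‖iteratedDerivWithin n u (Set.Icc a b) c‖ ≤ M :=
    fun c hc => le_csSup hbdd ⟨c, hc, rfl⟩
  have hmid : (a + b) / 2 ∈ Set.Ioo a b := by constructor <;> linarith
  have hM0 : 0 ≤ M := le_trans (norm_nonneg _) (hMle _ hmid)
  have hRHS : 0 ≤ (b - a) ^ n / (2 ^ (2 * n - 1) * (n.factorial : ℝ)) * M := by
    have hden : (0 : ℝ) < 2 ^ (2 * n - 1) * (n.factorial : ℝ) :=
      mul_pos (by positivity) (by exact_mod_cast n.factorial_pos)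
    apply mul_nonneg (div_nonneg (pow_nonneg (by linarith) n) hden.le) hM0
  set e : ℂ := u x - p.eval ((x : ℝ) : ℂ) with he_def
  by_cases he : e = 0
  · rw [he]; simpa using hRHS
  by_cases hxnode : ∃ k : Fin n, chebNode n a b k = x
  · exfalso
    obtain ⟨k, hk⟩ := hxnode
    apply he
    rw [he_def, ← hk, hinterp k, sub_self]
  -- main case
  have hfactpos : (0 : ℝ) < (n.factorial : ℝ) := by exact_mod_cast n.factorial_pos
  set σ : ℂ := e / (‖e‖ : ℂ) with hσ
  set L : ℂ →L[ℝ] ℝ := Complex.reCLM.comp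
    (((ContinuousLinearMap.mul ℂ ℂ) ((starRingEnd ℂ) σ)).restrictScalars ℝ) with hL
  have hLapp : ∀ z : ℂ, L z = ((starRingEnd ℂ) σ * z).re := fun z => rfl
  have hene : (‖e‖ : ℝ) ≠ 0 := norm_ne_zero_iff.mpr he
  have hLe : L e = ‖e‖ := by
    rw [hLapp]
    have : (starRingEnd ℂ) σ * e = (‖e‖ : ℂ) := by
      have hcne : ((‖e‖ : ℝ) : ℂ) ≠ 0 := Complex.ofReal_ne_zero.mpr hene
      rw [hσ, map_div₀, Complex.conj_ofReal, div_mul_eq_mul_div, mul_comm,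
        Complex.mul_conj', sq, mul_div_assoc, div_self hcne, mul_one]
    rw [this, Complex.ofReal_re]
  have hLnorm : ∀ z : ℂ, |L z| ≤ ‖z‖ := by
    intro z
    rw [hLapp]
    calc |((starRingEnd ℂ) σ * z).re| ≤ ‖(starRingEnd ℂ) σ * z‖ := Complex.abs_re_le_norm _
      _ = ‖σ‖ * ‖z‖ := by rw [norm_mul, RCLike.norm_conj]
      _ ≤ 1 * ‖z‖ := by
          apply mul_le_mul_of_nonneg_right _ (norm_nonneg _)
          rw [hσ, norm_div, Complex.norm_real, Real.norm_eq_abs, abs_of_nonneg (norm_nonneg e),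
            div_self hene]
      _ = ‖z‖ := one_mul _
  -- functions
  set pq : ℝ → ℂ := fun t => p.eval ((t : ℝ) : ℂ) with hpq
  have hpqC : ContDiff ℝ (n : WithTop ℕ∞) pq := by
    have h1 : ContDiff ℂ (n : WithTop ℕ∞) fun z : ℂ => p.eval z := polyeval_contDiff p
    exact (h1.restrict_scalars ℝ).comp Complex.ofRealCLM.contDiff
  set F : ℝ → ℂ := u - pq with hF
  have hFC : ContDiffOn ℝ (n : WithTop ℕ∞) F (Set.Icc a b) := hu.sub hpqC.contDiffOn
  set φ : ℝ → ℝ := fun t => L (F t) with hφ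
  have hφC : ContDiffOn ℝ (n : WithTop ℕ∞) φ (Set.Icc a b) := hFC.continuousLinearMap_comp L
  set W : ℝ[X] := ∏ k : Fin n, (Polynomial.X - Polynomial.C (chebNode n a b k)) with hW
  set w : ℝ → ℝ := fun t => W.eval t with hw
  have hwC : ContDiff ℝ (n : WithTop ℕ∞) w := polyeval_contDiff W
  set G : ℝ → ℝ := fun t => W.eval x * φ t - φ x * w t with hG
  have hA : ContDiffOn ℝ (n : WithTop ℕ∞) (fun t => W.eval x * φ t) (Set.Icc a b) :=
    contDiffOn_const.mul hφC
  have hB : ContDiffOn ℝ (n : WithTop ℕ∞) (fun t => φ x * w t) (Set.Icc a b) :=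
    contDiffOn_const.mul hwC.contDiffOn
  have hGC : ContDiffOn ℝ (n : WithTop ℕ∞) G (Set.Icc a b) := hA.sub hB
  -- nodes
  have hba : (0 : ℝ) < b - a := by linarith
  have hnodemem : ∀ k : Fin n, chebNode n a b k ∈ Set.Icc a b := by
    intro k
    have h1 := Real.neg_one_le_cos (x := chebAngle n k)
    have h2 := Real.cos_le_one (chebAngle n k)
    rw [chebNode_eq]
    constructor <;> nlinarith
  have hnodeinj : Function.Injective (fun k : Fin n => chebNode n a b k) := by
    intro k l hkl
    apply injective_cos_chebAngle hn
    simp only [chebNode_eq] at hkl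
    have : ((b - a) / 2) * Real.cos (chebAngle n k) = ((b - a) / 2) * Real.cos (chebAngle n l) := by
      linarith
    simpa using mul_left_cancel₀ (by positivity : (b - a) / 2 ≠ 0) this
  set S : Finset ℝ := insert x (Finset.image (fun k => chebNode n a b k) Finset.univ) with hS
  have hxnotmem : x ∉ Finset.image (fun k => chebNode n a b k) Finset.univ := by
    simp only [Finset.mem_image, Finset.mem_univ, true_and]
    rintro ⟨k, hk⟩
    exact hxnode ⟨k, hk⟩
  have hcard : S.card = n + 1 := by
    rw [hS, Finset.card_insert_of_notMem hxnotmem,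
      Finset.card_image_of_injective _ hnodeinj, Finset.card_univ, Fintype.card_fin]
  have hSmem : ∀ y ∈ S, y ∈ Set.Icc a b := by
    intro y hy
    rw [hS, Finset.mem_insert] at hy
    rcases hy with rfl | hy
    · exact hx
    · obtain ⟨k, _, rfl⟩ := Finset.mem_image.mp hy
      exact hnodemem k
  have hwnode : ∀ k : Fin n, w (chebNode n a b k) = 0 := by
    intro k
    rw [hw, hW]
    simp only [Polynomial.eval_prod, Polynomial.eval_sub, Polynomial.eval_X, Polynomial.eval_C]
    exact Finset.prod_eq_zero (Finset.mem_univ k) (by ring)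
  have hφnode : ∀ k : Fin n, φ (chebNode n a b k) = 0 := by
    intro k
    have hF0 : F (chebNode n a b k) = 0 := by
      show u (chebNode n a b k) - p.eval ((chebNode n a b k : ℝ) : ℂ) = 0
      rw [hinterp k, sub_self]
    show L (F (chebNode n a b k)) = 0
    rw [hF0, map_zero]
  have hGz : ∀ y ∈ S, G y = 0 := by
    intro y hy
    rw [hS, Finset.mem_insert] at hy
    rcases hy with rfl | hy
    · show W.eval y * φ y - φ y * w y = 0
      ring
    · obtain ⟨k, _, rfl⟩ := Finset.mem_image.mp hy
      show W.eval x * φ (chebNode n a b k) - φ x * w (chebNode n a b k) = 0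
      rw [hφnode k, hwnode k]
      ring
  obtain ⟨c, hc, hc0⟩ := rolle_finset hn hab hGC S hcard hSmem hGz
  have hc' : c ∈ Set.Icc a b := Set.Ioo_subset_Icc_self hc
  -- compute iterated derivative of G at c
  have h1 : iteratedDerivWithin n G (Set.Icc a b) c =
      W.eval x * iteratedDerivWithin n φ (Set.Icc a b) c -
        φ x * iteratedDerivWithin n w (Set.Icc a b) c := by
    rw [hG, show (fun t => W.eval x * φ t - φ x * w t) =
        (fun t => W.eval x * φ t) - (fun t => φ x * w t) from rfl,
      iteratedDerivWithin_sub hc' hU (hA c hc') (hB c hc'),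
      iteratedDerivWithin_const_mul hc' hU _ (hφC c hc'),
      iteratedDerivWithin_const_mul hc' hU _ (hwC.contDiffOn c hc')]
  have h2 : iteratedDerivWithin n φ (Set.Icc a b) c =
      L (iteratedDerivWithin n F (Set.Icc a b) c) := clm_comp_iDW L hFC hU hc'
  have h3 : iteratedDerivWithin n F (Set.Icc a b) c =
      iteratedDerivWithin n u (Set.Icc a b) c - iteratedDerivWithin n pq (Set.Icc a b) c := by
    rw [hF, iteratedDerivWithin_sub hc' hU (hu c hc') (hpqC.contDiffOn c hc')]
  have h4 : iteratedDerivWithin n pq (Set.Icc a b) c = 0 := by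
    rw [hpq, iDW_polyeval_complex n p hU c hc',
      Polynomial.iterate_derivative_eq_zero (lt_of_le_of_lt hdeg (by omega))]
    simp
  have h5 : iteratedDerivWithin n w (Set.Icc a b) c = (n.factorial : ℝ) := by
    rw [hw, iDW_polyeval_real n W hU c hc', hW, iterate_derivative_nodal, Polynomial.eval_C]
  set Dc : ℂ := iteratedDerivWithin n u (Set.Icc a b) c with hDc
  have hkey : ‖e‖ * (n.factorial : ℝ) = W.eval x * L Dc := by
    have := hc0
    rw [h1, h2, h3, h4, h5, sub_zero] at this
    have hφx : φ x = ‖e‖ := by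
      show L (F x) = ‖e‖
      rw [show F x = e from rfl, hLe]
    rw [sub_eq_zero, hφx] at this
    exact this.symm
  have hWbound : |W.eval x| ≤ (b - a) ^ n / 2 ^ (2 * n - 1) := cheb_nodal_bound hn hab hx
  have hbound : ‖e‖ * (n.factorial : ℝ) ≤ (b - a) ^ n / 2 ^ (2 * n - 1) * M := by
    calc ‖e‖ * (n.factorial : ℝ) = |W.eval x * L Dc| := by
          rw [← hkey, abs_of_nonneg (by positivity)]
      _ = |W.eval x| * |L Dc| := abs_mul _ _
      _ ≤ ((b - a) ^ n / 2 ^ (2 * n - 1)) * ‖Dc‖ := by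
          apply mul_le_mul hWbound (hLnorm Dc) (abs_nonneg _)
            (le_trans (abs_nonneg _) hWbound)
      _ ≤ ((b - a) ^ n / 2 ^ (2 * n - 1)) * M := by
          apply mul_le_mul_of_nonneg_left (hMle c hc) (by positivity)
  rw [← mul_le_mul_iff_of_pos_right hfactpos]
  calc ‖e‖ * (n.factorial : ℝ) ≤ (b - a) ^ n / 2 ^ (2 * n - 1) * M := hbound
    _ = (b - a) ^ n / (2 ^ (2 * n - 1) * (n.factorial : ℝ)) * M * (n.factorial : ℝ) := by
        field_simp
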